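/- For a multivariate Gaussian with mean μ and positive-definite covariance Σ, the gradient with respect to μ of the expected fitness J(μ) = E_{x~N(μ,Σ)}[f(x)] equals E_{x~N(μ,Σ)}[f(x) Σ⁻¹(x − μ)], provided f is bounded and measurable (so that differentiation under the integral sign is valid). -/

import Mathlib

open MeasureTheory Matrix Real Filter

noncomputable def gaussPdf {n : ℕ} (μ : Fin n → ℝ) (S : Matrix (Fin n) (Fin n) ℝ)
    (x : Fin n → ℝ) : ℝ :=
  (2 * Real.pi) ^ (-(n : ℝ) / 2) * S.det ^ (-(1 : ℝ) / 2) *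
    Real.exp (-((x - μ) ⬝ᵥ (S⁻¹ *ᵥ (x - μ))) / 2)

namespace GradAux
variable {n : ℕ}

noncomputable def dotCLM (y : Fin n → ℝ) : (Fin n → ℝ) →L[ℝ] ℝ :=
  LinearMap.toContinuousLinearMap
    { toFun := fun w => y ⬝ᵥ w
      map_add' := fun a b => by simp
      map_smul' := fun c a => by simp }

@[simp] lemma dotCLM_apply (y w : Fin n → ℝ) : dotCLM y w = y ⬝ᵥ w := rfl

noncomputable def dotCLM₂ : (Fin n → ℝ) →L[ℝ] (Fin n → ℝ) →L[ℝ] ℝ :=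
  LinearMap.toContinuousLinearMap
    { toFun := dotCLM
      map_add' := fun a b => by ext w; simp [add_dotProduct]
      map_smul' := fun c a => by ext w; simp [smul_dotProduct] }

@[simp] lemma dotCLM₂_apply (y w : Fin n → ℝ) : dotCLM₂ y w = y ⬝ᵥ w := rfl

lemma norm_dotCLM_le (y : Fin n → ℝ) : ‖dotCLM y‖ ≤ n * ‖y‖ := by
  apply ContinuousLinearMap.opNorm_le_bound _ (by positivity)
  intro w
  simp only [dotCLM_apply, Real.norm_eq_abs]
  calc |y ⬝ᵥ w| ≤ ∑ i, |y i * w i| := Finset.abs_sum_le_sum_abs _ _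
    _ ≤ ∑ _i : Fin n, ‖y‖ * ‖w‖ := by
        refine Finset.sum_le_sum fun i _ => ?_
        rw [abs_mul]
        exact mul_le_mul (norm_le_pi_norm y i) (norm_le_pi_norm w i) (abs_nonneg _)
          (norm_nonneg _)
    _ = n * ‖y‖ * ‖w‖ := by simp [Finset.sum_const]; ring

noncomputable def mulVecCLM (M : Matrix (Fin n) (Fin n) ℝ) : (Fin n → ℝ) →L[ℝ] (Fin n → ℝ) :=
  LinearMap.toContinuousLinearMap (Matrix.mulVecLin M)

@[simp] lemma mulVecCLM_apply (M : Matrix (Fin n) (Fin n) ℝ) (y : Fin n → ℝ) :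
    mulVecCLM M y = M *ᵥ y := rfl

lemma dot_symm {S : Matrix (Fin n) (Fin n) ℝ} (hsymm : Sᵀ = S) (a b : Fin n → ℝ) :
    a ⬝ᵥ S *ᵥ b = S *ᵥ a ⬝ᵥ b := by
  rw [Matrix.dotProduct_mulVec, ← Matrix.mulVec_transpose, hsymm]

end GradAux

namespace GradAux

lemma hasFDerivAt_gauss {n : ℕ} (f : (Fin n → ℝ) → ℝ) (S : Matrix (Fin n) (Fin n) ℝ)
    (hsymm : S⁻¹ᵀ = S⁻¹) (x m : Fin n → ℝ) :
    HasFDerivAt (fun m => f x * gaussPdf m S x)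
      ((f x * gaussPdf m S x) • dotCLM (S⁻¹ *ᵥ (x - m))) m := by
  set C : ℝ := (2 * Real.pi) ^ (-(n : ℝ) / 2) * S.det ^ (-(1 : ℝ) / 2) with hC
  set q : (Fin n → ℝ) → ℝ := fun m => (x - m) ⬝ᵥ (S⁻¹ *ᵥ (x - m)) with hq
  have hsub : HasFDerivAt (fun m : Fin n → ℝ => x - m)
      ((0 : (Fin n → ℝ) →L[ℝ] (Fin n → ℝ)) - ContinuousLinearMap.id ℝ _) m :=
    (hasFDerivAt_const x m).sub (hasFDerivAt_id m)
  have hmv : HasFDerivAt (fun m : Fin n → ℝ => S⁻¹ *ᵥ (x - m))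
      ((mulVecCLM S⁻¹).comp ((0 : (Fin n → ℝ) →L[ℝ] (Fin n → ℝ)) - ContinuousLinearMap.id ℝ _)) m :=
    (mulVecCLM S⁻¹).hasFDerivAt.comp m hsub
  have hpair : HasFDerivAt (fun m : Fin n → ℝ => (x - m, S⁻¹ *ᵥ (x - m)))
      (((0 : (Fin n → ℝ) →L[ℝ] (Fin n → ℝ)) - ContinuousLinearMap.id ℝ _).prod
        ((mulVecCLM S⁻¹).comp ((0 : (Fin n → ℝ) →L[ℝ] (Fin n → ℝ)) - ContinuousLinearMap.id ℝ _))) m :=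
    hsub.prodMk hmv
  have hbil := (dotCLM₂ (n := n)).isBoundedBilinearMap
  have hq' : HasFDerivAt q
      ((hbil.deriv (x - m, S⁻¹ *ᵥ (x - m))).comp
        (((0 : (Fin n → ℝ) →L[ℝ] (Fin n → ℝ)) - ContinuousLinearMap.id ℝ _).prod
          ((mulVecCLM S⁻¹).comp ((0 : (Fin n → ℝ) →L[ℝ] (Fin n → ℝ)) - ContinuousLinearMap.id ℝ _)))) m :=
    by have := (hbil.hasFDerivAt (x - m, S⁻¹ *ᵥ (x - m))).comp m hpair; exact this
  have hexp : HasFDerivAt (fun m => Real.exp ((-(1:ℝ)/2) * q m))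
      (Real.exp ((-(1:ℝ)/2) * q m) • ((-(1:ℝ)/2) • _)) m := (hq'.const_mul (-(1:ℝ)/2)).exp
  have hmain := hexp.const_mul (f x * C)
  have hfun : (fun m => f x * C * Real.exp ((-(1:ℝ)/2) * q m))
      = fun m => f x * gaussPdf m S x := by
    funext m'
    simp only [gaussPdf, hq, hC]
    ring_nf
  rw [hfun] at hmain
  refine hmain.congr_fderiv ?_
  refine ContinuousLinearMap.ext fun v => ?_
  simp only [ContinuousLinearMap.smul_apply, ContinuousLinearMap.comp_apply,
    ContinuousLinearMap.prod_apply, ContinuousLinearMap.sub_apply,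
    ContinuousLinearMap.zero_apply, ContinuousLinearMap.id_apply,
    IsBoundedBilinearMap.deriv_apply, dotCLM₂_apply, dotCLM_apply, mulVecCLM_apply,
    smul_eq_mul, gaussPdf, hq, hC]
  have h1 : (0 - v) ⬝ᵥ S⁻¹ *ᵥ (x - m) = -(S⁻¹ *ᵥ (x - m) ⬝ᵥ v) := by
    rw [zero_sub, neg_dotProduct, dotProduct_comm]
  have h2 : (x - m) ⬝ᵥ S⁻¹ *ᵥ (0 - v) = -(S⁻¹ *ᵥ (x - m) ⬝ᵥ v) := by
    rw [zero_sub, Matrix.mulVec_neg, dotProduct_neg, dot_symm hsymm]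
  rw [h1, h2]
  ring_nf
end GradAux

namespace GradAux

lemma posdef_lower {n : ℕ} (S : Matrix (Fin n) (Fin n) ℝ) (hS : S.PosDef) :
    ∃ c > 0, ∀ y : Fin n → ℝ, c * ‖y‖ ^ 2 ≤ y ⬝ᵥ S *ᵥ y := by
  have hcont : Continuous fun y : Fin n → ℝ => y ⬝ᵥ S *ᵥ y :=
    (dotCLM₂ (n := n)).isBoundedBilinearMap.continuous.comp
      (continuous_id.prodMk (mulVecCLM S).continuous)
  rcases Nat.eq_zero_or_pos n with hn | hn
  · refine ⟨1, one_pos, fun y => ?_⟩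
    subst hn
    have hy : y = 0 := Subsingleton.elim y 0
    have h0 : y ⬝ᵥ S *ᵥ y = 0 := by rw [hy]; simp
    have h1 : ‖y‖ = 0 := by rw [hy]; exact norm_zero
    rw [h0, h1]; norm_num
  · have y₁ : Fin n → ℝ := fun _ => 1
    have hy₁ : ‖(fun _ => 1 : Fin n → ℝ)‖ = 1 := by
      haveI : Nonempty (Fin n) := ⟨⟨0, hn⟩⟩
      simp [pi_norm_const]
    have hsph : (Metric.sphere (0 : Fin n → ℝ) 1).Nonempty :=
      ⟨fun _ => 1, by simp [hy₁]⟩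
    obtain ⟨y₀, hy₀mem, hmin⟩ := (isCompact_sphere (0 : Fin n → ℝ) 1).exists_isMinOn hsph
      hcont.continuousOn
    have hy₀norm : ‖y₀‖ = 1 := by simpa using hy₀mem
    have hy₀ne : y₀ ≠ 0 := by
      intro h; rw [h] at hy₀norm; simpa using hy₀norm
    have hc : 0 < y₀ ⬝ᵥ S *ᵥ y₀ := by
      have := hS.re_dotProduct_pos (x := y₀) hy₀ne
      simpa using this
    refine ⟨_, hc, fun y => ?_⟩
    rcases eq_or_ne y 0 with rfl | hy
    · simp
    · have hny : 0 < ‖y‖ := norm_pos_iff.mpr hy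
      set u : Fin n → ℝ := ‖y‖⁻¹ • y with hu
      have hunorm : ‖u‖ = 1 := by
        rw [hu, norm_smul]
        simp [abs_of_pos (inv_pos.mpr hny), inv_mul_cancel₀ hny.ne']
      have humem : u ∈ Metric.sphere (0 : Fin n → ℝ) 1 := by simp [hunorm]
      have hle : y₀ ⬝ᵥ S *ᵥ y₀ ≤ u ⬝ᵥ S *ᵥ u := hmin humem
      have hval : u ⬝ᵥ S *ᵥ u = ‖y‖⁻¹ * (‖y‖⁻¹ * (y ⬝ᵥ S *ᵥ y)) := by
        rw [hu]
        simp [smul_dotProduct, Matrix.mulVec_smul, dotProduct_smul, smul_eq_mul]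
      rw [hval] at hle
      have h3 := mul_le_mul_of_nonneg_left hle (sq_nonneg ‖y‖)
      have h4 : ‖y‖ ^ 2 * (‖y‖⁻¹ * (‖y‖⁻¹ * (y ⬝ᵥ S *ᵥ y))) = y ⬝ᵥ S *ᵥ y := by
        field_simp
      rw [h4] at h3
      linarith
end GradAux

namespace GradAux

lemma integrable_one_dim {b : ℝ} (hb : 0 < b) :
    Integrable (fun t : ℝ => (|t| + 1) * Real.exp (-b * t ^ 2)) := by
  have h1 : Integrable (fun t : ℝ => |t| * Real.exp (-b * t ^ 2)) := by
    refine ((integrable_mul_exp_neg_mul_sq hb).abs).congr ?_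
    filter_upwards with t
    rw [abs_mul, abs_of_pos (Real.exp_pos _)]
  have h2 := integrable_exp_neg_mul_sq hb
  refine (h1.add h2).congr ?_
  filter_upwards with t
  simp only [Pi.add_apply]
  ring

lemma norm_le_sum {n : ℕ} (y : Fin n → ℝ) : ‖y‖ ≤ ∑ i, |y i| := by
  refine pi_norm_le_iff_of_nonneg (Finset.sum_nonneg fun i _ => abs_nonneg _) |>.mpr fun i => ?_
  exact Finset.single_le_sum (fun j _ => abs_nonneg (y j)) (Finset.mem_univ i)

lemma integrable_centered {n : ℕ} {a : ℝ} (ha : 0 < a) :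
    Integrable (fun y : Fin n → ℝ => (‖y‖ + 1) * Real.exp (-a * ‖y‖ ^ 2)) := by
  rcases Nat.eq_zero_or_pos n with hn | hn
  · subst hn
    haveI : IsFiniteMeasure (volume : Measure (Fin 0 → ℝ)) :=
      ⟨by rw [volume_pi, Measure.pi_univ]; simp⟩
    have heq : (fun y : Fin 0 → ℝ => (‖y‖ + 1) * Real.exp (-a * ‖y‖ ^ 2))
        = fun _ => (‖(0 : Fin 0 → ℝ)‖ + 1) * Real.exp (-a * ‖(0 : Fin 0 → ℝ)‖ ^ 2) := by
      funext y; rw [Subsingleton.elim y 0]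
    rw [heq]; exact integrable_const _
  · have hnpos : (0 : ℝ) < n := by exact_mod_cast hn
    set b := a / n with hbdef
    have hbpos : 0 < b := div_pos ha hnpos
    have hint : Integrable (fun y : Fin n → ℝ =>
        ∑ j, ∏ i, (if i = j then (|y i| + 1) else 1) * Real.exp (-b * (y i) ^ 2)) := by
      apply integrable_finset_sum
      intro j _
      refine Integrable.fintype_prod
        (f := fun i t => (if i = j then (|t| + 1) else 1) * Real.exp (-b * t ^ 2)) fun i => ?_
      by_cases h : i = j
      · simpa [h] using integrable_one_dim hbpos
      · simpa [h] using integrable_exp_neg_mul_sq hbpos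
    have hcont : Continuous fun y : Fin n → ℝ => (‖y‖ + 1) * Real.exp (-a * ‖y‖ ^ 2) := by
      fun_prop
    refine hint.mono' hcont.aestronglyMeasurable ?_
    filter_upwards with y
    have hnn : 0 ≤ (‖y‖ + 1) * Real.exp (-a * ‖y‖ ^ 2) := by positivity
    rw [Real.norm_eq_abs, abs_of_nonneg hnn]
    have hexp : Real.exp (-a * ‖y‖ ^ 2) ≤ ∏ i, Real.exp (-b * (y i) ^ 2) := by
      rw [← Real.exp_sum]
      apply Real.exp_le_exp.mpr
      have hsum : ∑ i, (y i) ^ 2 ≤ n * ‖y‖ ^ 2 := by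
        calc ∑ i, (y i) ^ 2 ≤ ∑ _i : Fin n, ‖y‖ ^ 2 := by
              refine Finset.sum_le_sum fun i _ => ?_
              have := norm_le_pi_norm y i
              have h0 : (0:ℝ) ≤ |y i| := abs_nonneg _
              calc (y i) ^ 2 = |y i| ^ 2 := (sq_abs _).symm
                _ ≤ ‖y‖ ^ 2 := by
                    apply pow_le_pow_left₀ h0
                    simpa using this
          _ = n * ‖y‖ ^ 2 := by simp [Finset.sum_const]
      have : ∑ i, -b * (y i) ^ 2 = -b * ∑ i, (y i)^2 := by rw [Finset.mul_sum]
      rw [this]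
      have hb' : b * ∑ i, (y i)^2 ≤ a * ‖y‖ ^ 2 := by
        calc b * ∑ i, (y i)^2 ≤ b * (n * ‖y‖ ^ 2) :=
              mul_le_mul_of_nonneg_left hsum hbpos.le
          _ = a * ‖y‖ ^ 2 := by rw [hbdef]; field_simp
      linarith
    have hpoly : ‖y‖ + 1 ≤ ∑ j, (|y j| + 1) := by
      rw [Finset.sum_add_distrib]
      simp only [Finset.sum_const, Finset.card_univ, Fintype.card_fin, nsmul_eq_mul, mul_one]
      have := norm_le_sum y
      have h1 : (1:ℝ) ≤ n := by exact_mod_cast hn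
      linarith
    calc (‖y‖ + 1) * Real.exp (-a * ‖y‖ ^ 2)
        ≤ (∑ j, (|y j| + 1)) * ∏ i, Real.exp (-b * (y i) ^ 2) := by
          apply mul_le_mul hpoly hexp (Real.exp_pos _).le
          positivity
      _ = ∑ j, ∏ i, (if i = j then (|y i| + 1) else 1) * Real.exp (-b * (y i) ^ 2) := by
          rw [Finset.sum_mul]
          refine Finset.sum_congr rfl fun j _ => ?_
          rw [Finset.prod_mul_distrib]
          congr 1
          simp

lemma integrable_poly_gauss {n : ℕ} {a : ℝ} (ha : 0 < a) (μ : Fin n → ℝ) :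
    Integrable (fun x : Fin n → ℝ => (‖x - μ‖ + 1) * Real.exp (-a * ‖x - μ‖ ^ 2)) := by
  have h0 := integrable_centered (n := n) ha
  have := (measurePreserving_sub_right (volume : Measure (Fin n → ℝ)) μ).integrable_comp
    h0.aestronglyMeasurable
  exact this.mpr h0

end GradAux

namespace GradAux

lemma continuous_quad {n : ℕ} (M : Matrix (Fin n) (Fin n) ℝ) (m : Fin n → ℝ) :
    Continuous fun x : Fin n → ℝ => (x - m) ⬝ᵥ (M *ᵥ (x - m)) :=
  (dotCLM₂ (n := n)).isBoundedBilinearMap.continuous.comp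
    ((continuous_id.sub continuous_const).prodMk
      ((mulVecCLM M).continuous.comp (continuous_id.sub continuous_const)))

lemma continuous_gaussPdf {n : ℕ} (m : Fin n → ℝ) (S : Matrix (Fin n) (Fin n) ℝ) :
    Continuous fun x => gaussPdf m S x := by
  unfold gaussPdf
  exact continuous_const.mul (((continuous_quad S⁻¹ m).neg.div_const 2).rexp)

lemma continuous_dotSub {n : ℕ} (M : Matrix (Fin n) (Fin n) ℝ) (μ : Fin n → ℝ) :
    Continuous fun x : Fin n → ℝ => dotCLM (M *ᵥ (x - μ)) := by
  have h : (fun x : Fin n → ℝ => dotCLM (M *ᵥ (x - μ)))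
      = fun x => dotCLM₂ (mulVecCLM M (x - μ)) := rfl
  rw [h]
  exact dotCLM₂.continuous.comp
    ((mulVecCLM M).continuous.comp (continuous_id.sub continuous_const))

end GradAux

/-- Differentiation under the integral: `∇_μ E[f] = E[f(x) Σ⁻¹(x-μ)]`. -/
theorem grad_expected_fitness (n : ℕ) (f : (Fin n → ℝ) → ℝ)
    (hf : Measurable f) (B : ℝ) (hB : ∀ x, |f x| ≤ B)
    (μ : Fin n → ℝ) (S : Matrix (Fin n) (Fin n) ℝ) (hS : S.PosDef) :
    ∀ v : Fin n → ℝ,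
      fderiv ℝ (fun m : Fin n → ℝ => ∫ x : Fin n → ℝ, f x * gaussPdf m S x) μ v
        = (∫ x : Fin n → ℝ, (f x * gaussPdf μ S x) • (S⁻¹ *ᵥ (x - μ))) ⬝ᵥ v := by
  intro v
  classical
  obtain ⟨c, hc, hlow⟩ := GradAux.posdef_lower S⁻¹ hS.inv
  set C : ℝ := (2 * Real.pi) ^ (-(n : ℝ) / 2) * S.det ^ (-(1 : ℝ) / 2) with hC
  have hCpos : 0 < C := mul_pos (Real.rpow_pos_of_pos (by positivity) _)
    (Real.rpow_pos_of_pos hS.det_pos _)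
  have hsymm : S⁻¹ᵀ = S⁻¹ := hS.inv.isHermitian
  have hBnn : 0 ≤ B := le_trans (abs_nonneg _) (hB 0)
  set K : ℝ := ‖GradAux.mulVecCLM (n := n) S⁻¹‖ with hK
  have hKnn : 0 ≤ K := norm_nonneg _
  have hKle : ∀ y, ‖S⁻¹ *ᵥ y‖ ≤ K * ‖y‖ := fun y => (GradAux.mulVecCLM S⁻¹).le_opNorm y
  have hpdfpos : ∀ m x, 0 < gaussPdf m S x := fun m x => by
    rw [gaussPdf, ← hC]; exact mul_pos hCpos (Real.exp_pos _)
  have hpdf_le : ∀ m x, gaussPdf m S x ≤ C * Real.exp (-(c/2) * ‖x - m‖^2) := by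
    intro m x
    rw [gaussPdf, ← hC]
    refine mul_le_mul_of_nonneg_left ?_ hCpos.le
    apply Real.exp_le_exp.mpr
    nlinarith [hlow (x - m)]
  -- exponent comparison on the ball
  have hsq : ∀ m ∈ Metric.ball μ 1, ∀ x : Fin n → ℝ,
      Real.exp (-(c/2) * ‖x - m‖^2)
        ≤ Real.exp (c/2) * Real.exp (-(c/4) * ‖x - μ‖^2) := by
    intro m hm x
    have hdist : ‖m - μ‖ ≤ 1 := by
      have := Metric.mem_ball.mp hm
      rw [dist_eq_norm] at this
      linarith
    have hge : ‖x - μ‖ ≤ ‖x - m‖ + 1 := by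
      calc ‖x - μ‖ = ‖(x - m) + (m - μ)‖ := by congr 1; abel
        _ ≤ ‖x - m‖ + ‖m - μ‖ := norm_add_le _ _
        _ ≤ ‖x - m‖ + 1 := by linarith
    rw [← Real.exp_add]
    apply Real.exp_le_exp.mpr
    have h2 : ‖x - μ‖ ^ 2 ≤ (‖x - m‖ + 1) ^ 2 := pow_le_pow_left₀ (norm_nonneg _) hge 2
    nlinarith [mul_le_mul_of_nonneg_left h2 hc.le,
      mul_nonneg hc.le (sq_nonneg (‖x - m‖ - 1))]
  have hxm_le : ∀ m ∈ Metric.ball μ 1, ∀ x : Fin n → ℝ, ‖x - m‖ ≤ ‖x - μ‖ + 1 := by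
    intro m hm x
    have hdist : ‖μ - m‖ ≤ 1 := by
      have := Metric.mem_ball.mp hm
      rw [dist_eq_norm, norm_sub_rev] at this
      linarith
    calc ‖x - m‖ = ‖(x - μ) + (μ - m)‖ := by congr 1; abel
      _ ≤ ‖x - μ‖ + ‖μ - m‖ := norm_add_le _ _
      _ ≤ ‖x - μ‖ + 1 := by linarith
  have hexp_half : ∀ x : Fin n → ℝ,
      Real.exp (-(c/2) * ‖x - μ‖^2) ≤ Real.exp (-(c/4) * ‖x - μ‖^2) := by
    intro x
    apply Real.exp_le_exp.mpr
    nlinarith [sq_nonneg ‖x - μ‖, hc.le]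
  have hKle' : ∀ y : Fin n → ℝ, ‖S⁻¹ *ᵥ y‖ ≤ (↑n * K + 1) * ‖y‖ := by
    intro y
    calc ‖S⁻¹ *ᵥ y‖ ≤ K * ‖y‖ := hKle y
      _ ≤ (↑n * K + 1) * ‖y‖ := by
          refine mul_le_mul_of_nonneg_right ?_ (norm_nonneg _)
          rcases Nat.eq_zero_or_pos n with h | h
          · have hK0 : GradAux.mulVecCLM (n := n) S⁻¹ = 0 := by
              subst h; exact Subsingleton.elim _ _
            rw [hK, hK0, norm_zero]
            positivity
          · have h1 : (1:ℝ) ≤ n := by exact_mod_cast h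
            nlinarith
  have hbound_int : Integrable (fun x : Fin n → ℝ =>
      (B * C * (↑n * K + 1) * Real.exp (c/2)) *
        ((‖x - μ‖ + 1) * Real.exp (-(c/4) * ‖x - μ‖^2))) :=
    (GradAux.integrable_poly_gauss (by linarith : (0:ℝ) < c/4) μ).const_mul _
  have hmeasx : ∀ m : Fin n → ℝ, AEStronglyMeasurable (fun x => f x * gaussPdf m S x)
      (volume : Measure (Fin n → ℝ)) := fun m =>
    (hf.mul (GradAux.continuous_gaussPdf m S).measurable).aestronglyMeasurable
  have hF'meas : ∀ m : Fin n → ℝ, AEStronglyMeasurable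
      (fun x => (f x * gaussPdf m S x) • GradAux.dotCLM (S⁻¹ *ᵥ (x - m)))
      (volume : Measure (Fin n → ℝ)) := fun m =>
    (hmeasx m).smul (GradAux.continuous_dotSub S⁻¹ m).aestronglyMeasurable
  have habs : ∀ m x : Fin n → ℝ, |f x * gaussPdf m S x|
      ≤ B * (C * Real.exp (-(c/2) * ‖x - m‖^2)) := by
    intro m x
    rw [abs_mul, abs_of_pos (hpdfpos m x)]
    exact mul_le_mul (hB x) (hpdf_le m x) (hpdfpos m x).le hBnn
  have hFbound : ∀ m ∈ Metric.ball μ 1, ∀ x : Fin n → ℝ,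
      ‖(f x * gaussPdf m S x) • GradAux.dotCLM (S⁻¹ *ᵥ (x - m))‖
        ≤ (B * C * (↑n * K + 1) * Real.exp (c/2)) *
            ((‖x - μ‖ + 1) * Real.exp (-(c/4) * ‖x - μ‖^2)) := by
    intro m hm x
    rw [norm_smul (f x * gaussPdf m S x) (GradAux.dotCLM (S⁻¹ *ᵥ (x - m))), Real.norm_eq_abs]
    calc |f x * gaussPdf m S x| * ‖GradAux.dotCLM (S⁻¹ *ᵥ (x - m))‖
        ≤ (B * (C * Real.exp (-(c/2) * ‖x - m‖^2))) * ((↑n * K + 1) * (‖x - μ‖ + 1)) := by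
          apply mul_le_mul (habs m x)
          · calc ‖GradAux.dotCLM (S⁻¹ *ᵥ (x - m))‖ ≤ ↑n * ‖S⁻¹ *ᵥ (x - m)‖ :=
                  GradAux.norm_dotCLM_le _
              _ ≤ ↑n * (K * ‖x - m‖) :=
                  mul_le_mul_of_nonneg_left (hKle _) (by positivity)
              _ ≤ ↑n * (K * (‖x - μ‖ + 1)) := by
                  refine mul_le_mul_of_nonneg_left ?_ (by positivity)
                  exact mul_le_mul_of_nonneg_left (hxm_le m hm x) hKnn
              _ ≤ (↑n * K + 1) * (‖x - μ‖ + 1) := by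
                  have h0 : (0:ℝ) ≤ ‖x - μ‖ + 1 := by positivity
                  nlinarith
          · exact norm_nonneg _
          · have : (0:ℝ) ≤ C * Real.exp (-(c/2) * ‖x - m‖^2) := by positivity
            exact mul_nonneg hBnn this
      _ = (B * C * (↑n * K + 1) * (‖x - μ‖ + 1)) * Real.exp (-(c/2) * ‖x - m‖^2) := by ring
      _ ≤ (B * C * (↑n * K + 1) * (‖x - μ‖ + 1)) *
            (Real.exp (c/2) * Real.exp (-(c/4) * ‖x - μ‖^2)) := by
          refine mul_le_mul_of_nonneg_left (hsq m hm x) ?_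
          have h1 : (0:ℝ) ≤ ↑n * K + 1 := by positivity
          have h2 : (0:ℝ) ≤ ‖x - μ‖ + 1 := by positivity
          exact mul_nonneg (mul_nonneg (mul_nonneg hBnn hCpos.le) h1) h2
      _ = (B * C * (↑n * K + 1) * Real.exp (c/2)) *
            ((‖x - μ‖ + 1) * Real.exp (-(c/4) * ‖x - μ‖^2)) := by ring
  have hF_int : Integrable (fun x : Fin n → ℝ => f x * gaussPdf μ S x) := by
    refine hbound_int.mono' (hmeasx μ) ?_
    filter_upwards with x
    rw [Real.norm_eq_abs]
    have e1 : (1:ℝ) ≤ Real.exp (c/2) := by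
      rw [← Real.exp_zero]; exact Real.exp_le_exp.mpr (by linarith)
    have e2 : (1:ℝ) ≤ ↑n * K + 1 := by
      have : (0:ℝ) ≤ ↑n * K := by positivity
      linarith
    have e3 : (1:ℝ) ≤ ‖x - μ‖ + 1 := by
      have := norm_nonneg (x - μ); linarith
    calc |f x * gaussPdf μ S x| ≤ B * (C * Real.exp (-(c/2) * ‖x - μ‖^2)) := habs μ x
      _ ≤ B * (C * Real.exp (-(c/4) * ‖x - μ‖^2)) := by
          refine mul_le_mul_of_nonneg_left ?_ hBnn
          exact mul_le_mul_of_nonneg_left (hexp_half x) hCpos.le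
      _ ≤ (B * C * (↑n * K + 1) * Real.exp (c/2)) *
            ((‖x - μ‖ + 1) * Real.exp (-(c/4) * ‖x - μ‖^2)) := by
          have hE2 : (0:ℝ) < Real.exp (-(c/4) * ‖x - μ‖^2) := Real.exp_pos _
          have hBC : (0:ℝ) ≤ B * C := mul_nonneg hBnn hCpos.le
          nlinarith [mul_le_mul (mul_le_mul e2 e1 zero_le_one (by linarith)) e3 zero_le_one
            (by nlinarith), mul_nonneg hBC hE2.le]
  have h_diff : ∀ᵐ x : Fin n → ℝ, ∀ m ∈ Metric.ball μ 1,
      HasFDerivAt (fun m => f x * gaussPdf m S x)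
        ((f x * gaussPdf m S x) • GradAux.dotCLM (S⁻¹ *ᵥ (x - m))) m :=
    Filter.Eventually.of_forall fun x m _ => GradAux.hasFDerivAt_gauss f S hsymm x m
  have hD := hasFDerivAt_integral_of_dominated_of_fderiv_le (𝕜 := ℝ)
    (F := fun m x => f x * gaussPdf m S x)
    (F' := fun m x => (f x * gaussPdf m S x) • GradAux.dotCLM (S⁻¹ *ᵥ (x - m)))
    (bound := fun x => (B * C * (↑n * K + 1) * Real.exp (c/2)) *
      ((‖x - μ‖ + 1) * Real.exp (-(c/4) * ‖x - μ‖^2)))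
    (Metric.ball_mem_nhds μ one_pos) (Filter.Eventually.of_forall fun m => hmeasx m) hF_int (hF'meas μ)
    (Filter.Eventually.of_forall fun x m hm => hFbound m hm x) hbound_int h_diff
  rw [hD.fderiv]
  have hint' : Integrable (fun x => (f x * gaussPdf μ S x) • GradAux.dotCLM (S⁻¹ *ᵥ (x - μ))) :=
    hbound_int.mono' (hF'meas μ) (Filter.Eventually.of_forall fun x =>
      hFbound μ (Metric.mem_ball_self one_pos) x)
  rw [ContinuousLinearMap.integral_apply hint']
  have hgmeas : AEStronglyMeasurable
      (fun x : Fin n → ℝ => (f x * gaussPdf μ S x) • (S⁻¹ *ᵥ (x - μ)))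
      (volume : Measure (Fin n → ℝ)) :=
    ((hf.mul (GradAux.continuous_gaussPdf μ S).measurable).aestronglyMeasurable).smul
      (((GradAux.mulVecCLM S⁻¹).continuous.comp
        (continuous_id.sub continuous_const)).aestronglyMeasurable)
  have hgint : Integrable (fun x : Fin n → ℝ => (f x * gaussPdf μ S x) • (S⁻¹ *ᵥ (x - μ))) := by
    refine hbound_int.mono' hgmeas ?_
    filter_upwards with x
    rw [norm_smul (f x * gaussPdf μ S x) (S⁻¹ *ᵥ (x - μ)), Real.norm_eq_abs]
    calc |f x * gaussPdf μ S x| * ‖S⁻¹ *ᵥ (x - μ)‖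
        ≤ (B * (C * Real.exp (-(c/2) * ‖x - μ‖^2))) * ((↑n * K + 1) * (‖x - μ‖ + 1)) := by
          apply mul_le_mul (habs μ x)
          · calc ‖S⁻¹ *ᵥ (x - μ)‖ ≤ (↑n * K + 1) * ‖x - μ‖ := hKle' _
              _ ≤ (↑n * K + 1) * (‖x - μ‖ + 1) := by
                  refine mul_le_mul_of_nonneg_left (by linarith) (by positivity)
          · exact norm_nonneg _
          · have : (0:ℝ) ≤ C * Real.exp (-(c/2) * ‖x - μ‖^2) := by positivity
            exact mul_nonneg hBnn this
      _ = (B * C * (↑n * K + 1) * (‖x - μ‖ + 1)) * Real.exp (-(c/2) * ‖x - μ‖^2) := by ring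
      _ ≤ (B * C * (↑n * K + 1) * (‖x - μ‖ + 1)) *
            (Real.exp (c/2) * Real.exp (-(c/4) * ‖x - μ‖^2)) := by
          refine mul_le_mul_of_nonneg_left (hsq μ (Metric.mem_ball_self one_pos) x) ?_
          have h1 : (0:ℝ) ≤ ↑n * K + 1 := by positivity
          have h2 : (0:ℝ) ≤ ‖x - μ‖ + 1 := by positivity
          exact mul_nonneg (mul_nonneg (mul_nonneg hBnn hCpos.le) h1) h2
      _ = (B * C * (↑n * K + 1) * Real.exp (c/2)) *
            ((‖x - μ‖ + 1) * Real.exp (-(c/4) * ‖x - μ‖^2)) := by ring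
  have hR := (GradAux.dotCLM (n := n) v).integral_comp_comm hgint
  rw [dotProduct_comm (∫ x : Fin n → ℝ, (f x * gaussPdf μ S x) • (S⁻¹ *ᵥ (x - μ))) v,
    ← GradAux.dotCLM_apply, ← hR]
  refine integral_congr_ae (Filter.Eventually.of_forall fun x => ?_)
  simp only [ContinuousLinearMap.smul_apply, GradAux.dotCLM_apply, smul_eq_mul,
    dotProduct_smul]
  rw [dotProduct_comm]
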